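/- For density matrices ρ and σ on ℂ^d with canonical purifications |ψ^ρ⟩ = (I ⊗ √ρ)|Γ⟩ and |ψ^σ⟩ = (I ⊗ √σ)|Γ⟩, the root fidelity satisfies √F(ρ,σ) = sup over contractions W (matrices with ‖W‖ ≤ 1) of Re⟨ψ^ρ|(W ⊗ I)|ψ^σ⟩, and this equals the same supremum restricted to unitary W. -/

import Mathlib

open scoped ComplexOrder Kronecker
open Matrix

noncomputable def opNorm {m n : Type*} [Fintype m] [Fintype n] [DecidableEq n]
    (A : Matrix m n ℂ) : ℝ :=
  ‖(Matrix.toEuclideanLin A).toContinuousLinearMap‖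

/-- The positive semidefinite square root, as defined in Mathlib (Dec 2024) and since removed. -/
noncomputable def Matrix.PosSemidef.sqrt {n 𝕜 : Type*} [Fintype n] [DecidableEq n] [RCLike 𝕜]
    {A : Matrix n n 𝕜} (hA : A.PosSemidef) : Matrix n n 𝕜 :=
  hA.1.eigenvectorUnitary.1 * diagonal ((↑) ∘ (√·) ∘ hA.1.eigenvalues) *
  (star hA.1.eigenvectorUnitary : Matrix n n 𝕜)

noncomputable def traceNorm {n : Type*} [Fintype n] [DecidableEq n] (A : Matrix n n ℂ) : ℝ :=
  ((Matrix.posSemidef_conjTranspose_mul_self A).sqrt).trace.re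

noncomputable def frobNorm {n : Type*} [Fintype n] (A : Matrix n n ℂ) : ℝ :=
  Real.sqrt ((Aᴴ * A).trace.re)

lemma Matrix.PosSemidef.posSemidef_sqrt {n : Type*} [Fintype n] [DecidableEq n]
    {A : Matrix n n ℂ} (hA : A.PosSemidef) : hA.sqrt.PosSemidef := by
  unfold Matrix.PosSemidef.sqrt
  have hD : (diagonal (((↑) ∘ (√·) ∘ hA.1.eigenvalues : n → ℂ))).PosSemidef :=
    posSemidef_diagonal_iff.mpr (fun i => by
      simp only [Function.comp_apply]
      exact_mod_cast Real.sqrt_nonneg _)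
  exact hD.mul_mul_conjTranspose_same _

lemma Matrix.PosSemidef.sqrt_mul_self {n : Type*} [Fintype n] [DecidableEq n]
    {A : Matrix n n ℂ} (hA : A.PosSemidef) : hA.sqrt * hA.sqrt = A := by
  have hU : (star hA.1.eigenvectorUnitary : Matrix n n ℂ) * hA.1.eigenvectorUnitary.1 = 1 :=
    Unitary.star_mul_self_of_mem hA.1.eigenvectorUnitary.2
  conv_rhs => rw [hA.1.spectral_theorem, Unitary.conjStarAlgAut_apply]
  unfold Matrix.PosSemidef.sqrt
  set U : Matrix n n ℂ := hA.1.eigenvectorUnitary.1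
  set S : Matrix n n ℂ := star hA.1.eigenvectorUnitary
  simp only [Matrix.mul_assoc]
  rw [← Matrix.mul_assoc S U, hU, Matrix.one_mul, ← Matrix.mul_assoc (diagonal _) (diagonal _),
    diagonal_mul_diagonal]
  refine congrArg (fun D => U * (D * S)) (congrArg diagonal (funext fun i => ?_))
  simp only [Function.comp_apply]
  rw [← RCLike.ofReal_mul, Real.mul_self_sqrt (hA.eigenvalues_nonneg i)]

section Helpers

open scoped Matrix.Norms.L2Operator

variable {n : Type*} [Fintype n] [DecidableEq n]

lemma opNorm_eq_norm (A : Matrix n n ℂ) : opNorm A = ‖A‖ := rfl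

lemma l2norm_le_of {A : Matrix n n ℂ} {c : ℝ} (hc : 0 ≤ c)
    (h : ∀ x : EuclideanSpace ℂ n,
      ‖((WithLp.equiv 2 (n → ℂ)).symm (A *ᵥ (WithLp.equiv 2 (n → ℂ)) x))‖ ≤ c * ‖x‖) :
    ‖A‖ ≤ c := by
  rw [Matrix.l2_opNorm_def]
  exact ContinuousLinearMap.opNorm_le_bound _ hc (fun x => h x)

lemma l2norm_mulVec (A : Matrix n n ℂ) (x : EuclideanSpace ℂ n) :
    ‖((WithLp.equiv 2 (n → ℂ)).symm (A *ᵥ (WithLp.equiv 2 (n → ℂ)) x))‖ ≤ ‖A‖ * ‖x‖ :=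
  A.l2_opNorm_mulVec x

lemma norm_symm_star (v : n → ℂ) :
    ‖((WithLp.equiv 2 (n → ℂ)).symm (star v))‖ = ‖((WithLp.equiv 2 (n → ℂ)).symm v)‖ := by
  simp [EuclideanSpace.norm_eq]

lemma l2norm_map_star_le (A : Matrix n n ℂ) : ‖A.map star‖ ≤ ‖A‖ := by
  refine l2norm_le_of (norm_nonneg A) (fun x => ?_)
  have key : (A.map star) *ᵥ ((WithLp.equiv 2 (n → ℂ)) x)
      = star (A *ᵥ star ((WithLp.equiv 2 (n → ℂ)) x)) := by
    ext i
    simp [Matrix.mulVec, dotProduct, map_sum]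
  rw [key, norm_symm_star]
  calc _ ≤ ‖A‖ * ‖((WithLp.equiv 2 (n → ℂ)).symm (star ((WithLp.equiv 2 (n → ℂ)) x)))‖ := by
        simpa using l2norm_mulVec A ((WithLp.equiv 2 (n → ℂ)).symm (star ((WithLp.equiv 2 (n → ℂ)) x)))
    _ = ‖A‖ * ‖x‖ := by rw [show ((WithLp.equiv 2 (n → ℂ)).symm (star ((WithLp.equiv 2 (n → ℂ)) x))) = (WithLp.equiv 2 (n → ℂ)).symm (star ((WithLp.equiv 2 (n → ℂ)) ((WithLp.equiv 2 (n → ℂ)).symm ((WithLp.equiv 2 (n → ℂ)) x)))) by simp, Equiv.apply_symm_apply, norm_symm_star]; simp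

lemma l2norm_map_star (A : Matrix n n ℂ) : ‖A.map star‖ = ‖A‖ := by
  refine le_antisymm (l2norm_map_star_le A) ?_
  have := l2norm_map_star_le (A.map star)
  have h2 : (A.map star).map star = A := by ext i j; simp
  rwa [h2] at this

lemma l2norm_transpose (A : Matrix n n ℂ) : ‖Aᵀ‖ = ‖A‖ := by
  have h : Aᵀ = (A.map star)ᴴ := by ext i j; simp [Matrix.conjTranspose_apply]
  rw [h, Matrix.l2_opNorm_conjTranspose, l2norm_map_star]

set_option linter.unusedSectionVars false

lemma norm_symm_sq (v : n → ℂ) :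
    ‖((WithLp.equiv 2 (n → ℂ)).symm v)‖ ^ 2 = (star v ⬝ᵥ v).re := by
  have h := @inner_self_eq_norm_sq ℂ _ _ _ _ ((WithLp.equiv 2 (n → ℂ)).symm v)
  rw [← h, EuclideanSpace.inner_eq_star_dotProduct]
  simp [dotProduct]

lemma l2norm_unitary {U : Matrix n n ℂ} (hU : U ∈ Matrix.unitaryGroup n ℂ) :
    ‖U‖ ≤ 1 := by
  refine l2norm_le_of zero_le_one (fun x => ?_)
  rw [one_mul]
  have key : star (U *ᵥ ((WithLp.equiv 2 (n → ℂ)) x)) ⬝ᵥ (U *ᵥ ((WithLp.equiv 2 (n → ℂ)) x))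
      = star ((WithLp.equiv 2 (n → ℂ)) x) ⬝ᵥ ((WithLp.equiv 2 (n → ℂ)) x) := by
    rw [Matrix.star_mulVec, dotProduct_mulVec, Matrix.vecMul_vecMul,
      show Uᴴ = star U from rfl, Matrix.mem_unitaryGroup_iff'.mp hU]
    simp
  have h1 := norm_symm_sq (U *ᵥ ((WithLp.equiv 2 (n → ℂ)) x))
  have h2 := norm_symm_sq ((WithLp.equiv 2 (n → ℂ)) x)
  rw [key, ← h2] at h1
  have h3 : ((WithLp.equiv 2 (n → ℂ)).symm ((WithLp.equiv 2 (n → ℂ)) x)) = x := by simp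
  rw [h3] at h1
  nlinarith [norm_nonneg ((WithLp.equiv 2 (n → ℂ)).symm (U *ᵥ ((WithLp.equiv 2 (n → ℂ)) x))), norm_nonneg x]

lemma re_trace_mul_le {P : Matrix n n ℂ} (hP : P.PosSemidef) {X : Matrix n n ℂ}
    (hX : ‖X‖ ≤ 1) : (X * P).trace.re ≤ P.trace.re := by
  set R := hP.sqrt with hRdef
  have hR : R.PosSemidef := hP.posSemidef_sqrt
  have hRR : R * R = P := hP.sqrt_mul_self
  have hcycle : (X * P).trace = (R * X * R).trace := by
    rw [← hRR, ← Matrix.mul_assoc, Matrix.trace_mul_cycle]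
  rw [hcycle]
  have key : ∀ i, ((R * X * R) i i).re ≤ (P i i).re := by
    intro i
    set v : n → ℂ := fun a => R a i with hv
    have hRes : ∀ a b, R a b = star (R b a) := fun a b => (Matrix.IsHermitian.apply hR.1 a b).symm
    have h1 : (R * X * R) i i = star v ⬝ᵥ (X *ᵥ v) := by
      simp only [Matrix.mul_apply, Matrix.mulVec, dotProduct, Finset.sum_mul,
        Finset.mul_sum, Pi.star_apply, hv]
      rw [Finset.sum_comm]
      refine Finset.sum_congr rfl (fun a _ => Finset.sum_congr rfl (fun b _ => ?_))
      rw [← hRes i a]; ring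
    have h2 : star v ⬝ᵥ v = P i i := by
      rw [← hRR]
      simp only [Matrix.mul_apply, dotProduct, Pi.star_apply, hv]
      exact Finset.sum_congr rfl (fun a _ => by rw [← hRes i a])
    set vE : EuclideanSpace ℂ n := (WithLp.equiv 2 (n → ℂ)).symm v with hvE
    have hinner : (star v ⬝ᵥ (X *ᵥ v)).re
        = (inner ℂ vE ((WithLp.equiv 2 (n → ℂ)).symm (X *ᵥ v)) : ℂ).re := by
      rw [EuclideanSpace.inner_eq_star_dotProduct]
      simp [hvE, dotProduct, mul_comm]
    have hbound : (inner ℂ vE ((WithLp.equiv 2 (n → ℂ)).symm (X *ᵥ v)) : ℂ).re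
        ≤ ‖vE‖ * ‖((WithLp.equiv 2 (n → ℂ)).symm (X *ᵥ v))‖ := re_inner_le_norm (𝕜 := ℂ) _ _
    have hmv : ‖((WithLp.equiv 2 (n → ℂ)).symm (X *ᵥ v))‖ ≤ ‖X‖ * ‖vE‖ := by
      have := l2norm_mulVec X vE
      simpa [hvE] using this
    have hsq : ‖vE‖ ^ 2 = (P i i).re := by rw [hvE, norm_symm_sq, h2]
    have hXv : ‖((WithLp.equiv 2 (n → ℂ)).symm (X *ᵥ v))‖ ≤ ‖vE‖ := by
      calc _ ≤ ‖X‖ * ‖vE‖ := hmv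
        _ ≤ 1 * ‖vE‖ := by apply mul_le_mul_of_nonneg_right hX (norm_nonneg _)
        _ = ‖vE‖ := one_mul _
    calc ((R * X * R) i i).re = (star v ⬝ᵥ (X *ᵥ v)).re := by rw [h1]
      _ = (inner ℂ vE ((WithLp.equiv 2 (n → ℂ)).symm (X *ᵥ v)) : ℂ).re := hinner
      _ ≤ ‖vE‖ * ‖((WithLp.equiv 2 (n → ℂ)).symm (X *ᵥ v))‖ := hbound
      _ ≤ ‖vE‖ * ‖vE‖ := mul_le_mul_of_nonneg_left hXv (norm_nonneg _)
      _ = (P i i).re := by rw [← hsq]; ring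
  calc (R * X * R).trace.re = ∑ i, ((R * X * R) i i).re := by
        rw [Matrix.trace]; simp [Matrix.diag]
    _ ≤ ∑ i, (P i i).re := Finset.sum_le_sum (fun i _ => key i)
    _ = P.trace.re := by rw [Matrix.trace]; simp [Matrix.diag]


lemma spectral_exists {A : Matrix n n ℂ} (hA : A.IsHermitian) :
    ∃ (W : Matrix n n ℂ) (μ : n → ℝ), Wᴴ * W = 1 ∧ W * Wᴴ = 1 ∧
      A = W * Matrix.diagonal (fun i => (μ i : ℂ)) * Wᴴ := by
  refine ⟨(hA.eigenvectorUnitary : Matrix n n ℂ), hA.eigenvalues,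
    Matrix.mem_unitaryGroup_iff'.mp hA.eigenvectorUnitary.2,
    Matrix.mem_unitaryGroup_iff.mp hA.eigenvectorUnitary.2, ?_⟩
  convert hA.spectral_theorem using 2 <;> rfl


lemma polar_aux (N V : Matrix n n ℂ) (s : n → ℝ) (hV1 : Vᴴ * V = 1) (hV2 : V * Vᴴ = 1)
    (hNN : Nᴴ * N = V * Matrix.diagonal (fun i => (s i : ℂ) * (s i : ℂ)) * Vᴴ) :
    ∃ U ∈ Matrix.unitaryGroup n ℂ,
      N = U * (V * Matrix.diagonal (fun i => (s i : ℂ)) * Vᴴ) := by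
  classical
  set χ : n → ℂ := fun i => if s i = 0 then 0 else 1 with hχdef
  set g : n → ℂ := fun i => if s i = 0 then 1 else 0 with hgdef
  set c : n → ℂ := fun i => if s i = 0 then 0 else ((s i : ℂ))⁻¹ with hcdef
  have hχg : (fun i => χ i + g i) = fun _ : n => (1:ℂ) := by
    funext i; by_cases h : s i = 0 <;> simp [hχdef, hgdef, h]
  clear_value χ g c
  set B : Matrix n n ℂ := N * V * Matrix.diagonal c with hBdef
  have hBB : Bᴴ * B = Matrix.diagonal χ := by
    have e1 : Bᴴ * B = Matrix.diagonal (star c) * (Vᴴ * ((Nᴴ * N) * V)) * Matrix.diagonal c := by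
      rw [hBdef]
      simp only [Matrix.conjTranspose_mul, Matrix.diagonal_conjTranspose]
      noncomm_ring
    have e2 : Vᴴ * ((V * Matrix.diagonal (fun i => (s i : ℂ) * (s i : ℂ)) * Vᴴ) * V)
        = Matrix.diagonal (fun i => (s i : ℂ) * (s i : ℂ)) := by
      calc Vᴴ * ((V * Matrix.diagonal (fun i => (s i : ℂ) * (s i : ℂ)) * Vᴴ) * V)
          = (Vᴴ * V) * Matrix.diagonal (fun i => (s i : ℂ) * (s i : ℂ)) * (Vᴴ * V) := by
            noncomm_ring
        _ = _ := by rw [hV1]; noncomm_ring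
    rw [e1, hNN, e2, Matrix.diagonal_mul_diagonal, Matrix.diagonal_mul_diagonal]
    refine congrArg Matrix.diagonal (funext fun i => ?_)
    by_cases h : s i = 0
    · simp [hcdef, hχdef, h]
    · have hsc : (s i : ℂ) ≠ 0 := by exact_mod_cast h
      simp only [Pi.mul_apply, Pi.star_apply, hcdef, hχdef, if_neg h, star_inv₀,
        Complex.star_def, Complex.conj_ofReal]
      field_simp
  have hBχ : B * Matrix.diagonal χ = B := by
    rw [hBdef, Matrix.mul_assoc, Matrix.diagonal_mul_diagonal]
    congr 1
    refine congrArg Matrix.diagonal (funext fun i => ?_)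
    by_cases h : s i = 0 <;> simp [hcdef, hχdef, h]
  clear_value B
  obtain ⟨W, μ, hW1, hW2, hQW⟩ := spectral_exists (Matrix.isHermitian_mul_conjTranspose_self B)
  set μc : n → ℂ := fun j => (μ j : ℂ) with hμcdef
  clear_value μc
  have hQ2 : (B * Bᴴ) * (B * Bᴴ) = B * Bᴴ := by
    calc (B * Bᴴ) * (B * Bᴴ) = B * (Bᴴ * B) * Bᴴ := by noncomm_ring
      _ = (B * Matrix.diagonal χ) * Bᴴ := by rw [hBB]
      _ = B * Bᴴ := by rw [hBχ]
  have hμ01 : ∀ j, μ j = 0 ∨ μ j = 1 := by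
    intro j
    have hdd : Matrix.diagonal μc * Matrix.diagonal μc = Matrix.diagonal μc := by
      have h4 : (B * Bᴴ) * (B * Bᴴ) = W * (Matrix.diagonal μc * Matrix.diagonal μc) * Wᴴ := by
        rw [hQW]
        calc W * Matrix.diagonal μc * Wᴴ * (W * Matrix.diagonal μc * Wᴴ)
            = W * (Matrix.diagonal μc * (Wᴴ * W) * Matrix.diagonal μc) * Wᴴ := by noncomm_ring
          _ = _ := by rw [hW1]; noncomm_ring
      have h2 : ∀ (Z : Matrix n n ℂ), Wᴴ * (W * Z * Wᴴ) * W = Z := by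
        intro Z
        calc Wᴴ * (W * Z * Wᴴ) * W = (Wᴴ * W) * Z * (Wᴴ * W) := by noncomm_ring
          _ = Z := by rw [hW1]; noncomm_ring
      have h5 := hQ2
      rw [h4] at h5
      rw [hQW] at h5
      have := congrArg (fun Z => Wᴴ * Z * W) h5
      simpa only [h2] using this
    rw [Matrix.diagonal_mul_diagonal] at hdd
    have hjj : μc j * μc j = μc j := by
      have h := congrFun (congrFun hdd j) j
      simpa [Matrix.diagonal_apply_eq] using h
    simp only [hμcdef] at hjj
    have hr : μ j * μ j = μ j := by exact_mod_cast hjj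
    by_cases h : μ j = 0
    · exact Or.inl h
    · right
      have : μ j * μ j = μ j * 1 := by linarith
      exact mul_left_cancel₀ h this
  have htr : ∑ i, χ i = ∑ j, μc j := by
    have t1 : (B * Bᴴ).trace = ∑ j, μc j := by
      rw [hQW, Matrix.trace_mul_cycle, show Wᴴ * W = 1 from hW1]
      simp [Matrix.trace_diagonal]
    have t2 : (B * Bᴴ).trace = ∑ i, χ i := by
      rw [Matrix.trace_mul_comm, hBB]
      simp [Matrix.trace_diagonal]
    rw [← t1, ← t2]
  have hcard : Fintype.card {i // s i = 0} = Fintype.card {j // μ j = 0} := by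
    have hchi : ∑ i, χ i = ((Finset.univ.filter (fun i => ¬ s i = 0)).card : ℂ) := by
      rw [← Finset.sum_boole]
      refine Finset.sum_congr rfl (fun i _ => ?_)
      by_cases h : s i = 0 <;> simp [hχdef, h]
    have hmu : ∑ j, μc j = ((Finset.univ.filter (fun j => ¬ μ j = 0)).card : ℂ) := by
      rw [← Finset.sum_boole]
      refine Finset.sum_congr rfl (fun j _ => ?_)
      rcases hμ01 j with h | h <;> norm_num [hμcdef, h]
    have hne : (Finset.univ.filter (fun i => ¬ s i = 0)).card
        = (Finset.univ.filter (fun j => ¬ μ j = 0)).card := by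
      have := htr
      rw [hchi, hmu] at this
      exact_mod_cast this
    have c1 := Finset.card_filter_add_card_filter_not (s := (Finset.univ : Finset n))
      (p := fun i => s i = 0)
    have c2 := Finset.card_filter_add_card_filter_not (s := (Finset.univ : Finset n))
      (p := fun j => μ j = 0)
    rw [Fintype.card_subtype, Fintype.card_subtype]
    omega
  obtain ⟨e⟩ : Nonempty ({i // s i = 0} ≃ {j // μ j = 0}) := ⟨Fintype.equivOfCardEq hcard⟩
  set E : Matrix n n ℂ := Matrix.of (fun j i =>
    if h : s i = 0 then (if ((e ⟨i, h⟩ : {j // μ j = 0}) : n) = j then 1 else 0) else 0)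
    with hEdef
  clear_value E
  have hstarχ : star χ = χ := by
    funext i; by_cases h : s i = 0 <;> simp [hχdef, h]
  have hEE : Eᴴ * E = Matrix.diagonal g := by
    ext i i'
    simp only [Matrix.mul_apply, Matrix.conjTranspose_apply, hEdef, Matrix.of_apply]
    by_cases h : s i = 0
    · by_cases h' : s i' = 0
      · simp only [dif_pos h, dif_pos h', apply_ite (star : ℂ → ℂ), star_one, star_zero, ite_mul, one_mul,
          zero_mul]
        rw [Finset.sum_ite_eq Finset.univ ((e ⟨i, h⟩ : {j // μ j = 0}) : n)
          (fun j => if ((e ⟨i', h'⟩ : {j // μ j = 0}) : n) = j then (1:ℂ) else 0)]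
        simp only [Finset.mem_univ, if_true]
        by_cases hii : i = i'
        · subst hii
          simp [Matrix.diagonal_apply_eq, hgdef, h]
        · have hee : ((e ⟨i', h'⟩ : {j // μ j = 0}) : n) ≠ ((e ⟨i, h⟩ : {j // μ j = 0}) : n) := by
            intro hcon
            apply hii
            have := e.injective (Subtype.ext hcon)
            exact (congrArg Subtype.val this).symm
          rw [if_neg hee, Matrix.diagonal_apply_ne _ hii]
      · simp only [dif_neg h']
        rw [Matrix.diagonal_apply_ne _ (show i ≠ i' from fun hii => h' (by rw [← hii]; exact h))]
        simp
    · simp only [dif_neg h, star_zero, zero_mul]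
      by_cases hii : i = i'
      · subst hii
        simp [Matrix.diagonal_apply_eq, hgdef, h]
      · rw [Matrix.diagonal_apply_ne _ hii]
        simp
  have hμE : Matrix.diagonal μc * E = 0 := by
    ext j i
    rw [Matrix.diagonal_mul]
    simp only [hEdef, Matrix.of_apply, Matrix.zero_apply]
    by_cases h : s i = 0
    · simp only [dif_pos h]
      by_cases hj : ((e ⟨i, h⟩ : {j // μ j = 0}) : n) = j
      · rw [if_pos hj]
        have : μ j = 0 := hj ▸ (e ⟨i, h⟩).2
        simp [hμcdef, this]
      · rw [if_neg hj, mul_zero]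
    · simp [dif_neg h]
  have hEχ : E * Matrix.diagonal χ = 0 := by
    ext j i
    rw [Matrix.mul_diagonal]
    simp only [hEdef, Matrix.of_apply, Matrix.zero_apply]
    by_cases h : s i = 0
    · simp [hχdef, h]
    · simp [dif_neg h]
  have hBQ : Bᴴ * (B * Bᴴ) = Bᴴ := by
    calc Bᴴ * (B * Bᴴ) = (Bᴴ * B) * Bᴴ := by noncomm_ring
      _ = Matrix.diagonal χ * Bᴴ := by rw [hBB]
      _ = (B * Matrix.diagonal χ)ᴴ := by
          rw [Matrix.conjTranspose_mul, Matrix.diagonal_conjTranspose, hstarχ]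
      _ = Bᴴ := by rw [hBχ]
  have hQWmul : (B * Bᴴ) * W = W * Matrix.diagonal μc := by
    calc (B * Bᴴ) * W = W * Matrix.diagonal μc * (Wᴴ * W) := by rw [hQW]; noncomm_ring
      _ = W * Matrix.diagonal μc := by rw [hW1, Matrix.mul_one]
  have hBWE : Bᴴ * (W * E) = 0 := by
    calc Bᴴ * (W * E) = (Bᴴ * (B * Bᴴ)) * (W * E) := by rw [hBQ]
      _ = Bᴴ * (((B * Bᴴ) * W) * E) := by noncomm_ring
      _ = Bᴴ * ((W * Matrix.diagonal μc) * E) := by rw [hQWmul]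
      _ = (Bᴴ * W) * (Matrix.diagonal μc * E) := by noncomm_ring
      _ = 0 := by rw [hμE, Matrix.mul_zero]
  have hM : (B + W * E)ᴴ * (B + W * E) = 1 := by
    have expand : (B + W * E)ᴴ * (B + W * E)
        = Bᴴ * B + Bᴴ * (W * E) + ((Bᴴ * (W * E))ᴴ) + Eᴴ * (Wᴴ * W) * E := by
      simp only [Matrix.conjTranspose_add, Matrix.conjTranspose_mul,
        Matrix.conjTranspose_conjTranspose]
      noncomm_ring
    rw [expand, hBB, hBWE, Matrix.conjTranspose_zero, hW1, Matrix.mul_one, hEE]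
    rw [add_zero, add_zero, Matrix.diagonal_add, hχg]
    exact Matrix.diagonal_one
  have hMmem : (B + W * E) ∈ Matrix.unitaryGroup n ℂ := Matrix.mem_unitaryGroup_iff'.mpr hM
  have hVmem : V ∈ Matrix.unitaryGroup n ℂ := Matrix.mem_unitaryGroup_iff.mpr hV2
  have hMχ : (B + W * E) * Matrix.diagonal χ = B := by
    rw [Matrix.add_mul, hBχ, Matrix.mul_assoc, hEχ, Matrix.mul_zero, add_zero]
  have hNg : N * V * Matrix.diagonal g = 0 := by
    rw [← Matrix.conjTranspose_mul_self_eq_zero]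
    have e1 : (N * V * Matrix.diagonal g)ᴴ * (N * V * Matrix.diagonal g)
        = Matrix.diagonal (star g) * (Vᴴ * ((Nᴴ * N) * V)) * Matrix.diagonal g := by
      simp only [Matrix.conjTranspose_mul, Matrix.diagonal_conjTranspose]
      noncomm_ring
    have e2 : Vᴴ * ((V * Matrix.diagonal (fun i => (s i : ℂ) * (s i : ℂ)) * Vᴴ) * V)
        = Matrix.diagonal (fun i => (s i : ℂ) * (s i : ℂ)) := by
      calc Vᴴ * ((V * Matrix.diagonal (fun i => (s i : ℂ) * (s i : ℂ)) * Vᴴ) * V)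
          = (Vᴴ * V) * Matrix.diagonal (fun i => (s i : ℂ) * (s i : ℂ)) * (Vᴴ * V) := by
            noncomm_ring
        _ = _ := by rw [hV1]; noncomm_ring
    rw [e1, hNN, e2, Matrix.diagonal_mul_diagonal, Matrix.diagonal_mul_diagonal]
    refine Eq.trans (congrArg Matrix.diagonal (funext fun i => ?_)) Matrix.diagonal_zero
    by_cases h : s i = 0 <;> simp [hgdef, h]
  have hNVχ : N * V * Matrix.diagonal χ = N * V := by
    calc N * V * Matrix.diagonal χ
        = N * V * Matrix.diagonal χ + N * V * Matrix.diagonal g := by rw [hNg, add_zero]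
      _ = N * V * (Matrix.diagonal χ + Matrix.diagonal g) := by rw [Matrix.mul_add]
      _ = N * V * Matrix.diagonal (fun i => χ i + g i) := by rw [Matrix.diagonal_add]
      _ = N * V := by rw [hχg, Matrix.diagonal_one, Matrix.mul_one]
  refine ⟨(B + W * E) * Vᴴ, ?_, ?_⟩
  · exact mul_mem hMmem (Unitary.star_mem hVmem)
  · calc N = N * (V * Vᴴ) := by rw [hV2, Matrix.mul_one]
      _ = (N * V * Matrix.diagonal χ) * Vᴴ := by rw [hNVχ]; noncomm_ring
      _ = (N * V * (Matrix.diagonal c * Matrix.diagonal (fun i => (s i : ℂ)))) * Vᴴ := by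
          rw [Matrix.diagonal_mul_diagonal]
          congr 2
          refine congrArg Matrix.diagonal (funext fun i => ?_)
          by_cases h : s i = 0
          · simp [hcdef, hχdef, h]
          · have hsc : (s i : ℂ) ≠ 0 := by exact_mod_cast h
            simp only [Pi.mul_apply, hcdef, hχdef, if_neg h]
            field_simp
      _ = (B * Matrix.diagonal (fun i => (s i : ℂ))) * Vᴴ := by
          rw [hBdef]; noncomm_ring
      _ = ((B + W * E) * Matrix.diagonal χ * Matrix.diagonal (fun i => (s i : ℂ))) * Vᴴ := by
          rw [hMχ]
      _ = ((B + W * E) * Matrix.diagonal (fun i => χ i * (s i : ℂ))) * Vᴴ := by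
          have hd : Matrix.diagonal χ * Matrix.diagonal (fun i => (s i : ℂ))
              = Matrix.diagonal (fun i => χ i * (s i : ℂ)) := by
            rw [Matrix.diagonal_mul_diagonal]
          calc ((B + W * E) * Matrix.diagonal χ * Matrix.diagonal (fun i => (s i : ℂ))) * Vᴴ
              = ((B + W * E) * (Matrix.diagonal χ * Matrix.diagonal (fun i => (s i : ℂ)))) * Vᴴ := by
                noncomm_ring
            _ = _ := by rw [hd]
      _ = ((B + W * E) * Matrix.diagonal (fun i => (s i : ℂ))) * Vᴴ := by
          congr 2
          refine congrArg Matrix.diagonal (funext fun i => ?_)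
          by_cases h : s i = 0 <;> simp [hχdef, h]
      _ = ((B + W * E) * Vᴴ) * (V * Matrix.diagonal (fun i => (s i : ℂ)) * Vᴴ) := by
          calc (B + W * E) * Matrix.diagonal (fun i => (s i : ℂ)) * Vᴴ
              = (B + W * E) * (Vᴴ * V) * Matrix.diagonal (fun i => (s i : ℂ)) * Vᴴ := by
                rw [hV1, Matrix.mul_one]
            _ = _ := by noncomm_ring

theorem exists_polar (N : Matrix n n ℂ) :
    ∃ U ∈ Matrix.unitaryGroup n ℂ,
      N = U * (Matrix.posSemidef_conjTranspose_mul_self N).sqrt := by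
  have hP : (Matrix.posSemidef_conjTranspose_mul_self N).sqrt.PosSemidef :=
    (Matrix.posSemidef_conjTranspose_mul_self N).posSemidef_sqrt
  have hP2 : (Matrix.posSemidef_conjTranspose_mul_self N).sqrt
      * (Matrix.posSemidef_conjTranspose_mul_self N).sqrt = Nᴴ * N :=
    (Matrix.posSemidef_conjTranspose_mul_self N).sqrt_mul_self
  obtain ⟨V, s, hV1, hV2, hD⟩ := spectral_exists hP.1
  have hNN : Nᴴ * N = V * Matrix.diagonal (fun i => (s i : ℂ) * (s i : ℂ)) * Vᴴ := by
    rw [← hP2, hD]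
    have hd : Matrix.diagonal (fun i => (s i : ℂ)) * Matrix.diagonal (fun i => (s i : ℂ))
        = Matrix.diagonal (fun i => (s i : ℂ) * (s i : ℂ)) := by
      rw [Matrix.diagonal_mul_diagonal]
    calc (V * Matrix.diagonal (fun i => (s i : ℂ)) * Vᴴ)
          * (V * Matrix.diagonal (fun i => (s i : ℂ)) * Vᴴ)
        = V * (Matrix.diagonal (fun i => (s i : ℂ)) * (Vᴴ * V)
            * Matrix.diagonal (fun i => (s i : ℂ))) * Vᴴ := by noncomm_ring
      _ = V * (Matrix.diagonal (fun i => (s i : ℂ)) * Matrix.diagonal (fun i => (s i : ℂ))) * Vᴴ := by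
          rw [hV1, Matrix.mul_one]
      _ = _ := by rw [hd]
  obtain ⟨U, hU, hUeq⟩ := polar_aux N V s hV1 hV2 hNN
  exact ⟨U, hU, by rw [hD]; exact hUeq⟩

section kron
variable {d : ℕ}

lemma psi_eq (S : Matrix (Fin d) (Fin d) ℂ) :
    ((1 : Matrix (Fin d) (Fin d) ℂ) ⊗ₖ S).mulVec (fun p => if p.1 = p.2 then 1 else 0)
      = fun p => S p.2 p.1 := by
  funext p
  obtain ⟨i, j⟩ := p
  simp only [Matrix.mulVec, dotProduct, Fintype.sum_prod_type,
    Matrix.kroneckerMap_apply, Matrix.one_apply]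
  simp [ite_mul, mul_ite, Finset.sum_ite_eq, Finset.sum_ite_eq']

lemma inner_kron (R S : Matrix (Fin d) (Fin d) ℂ) (hR : R.IsHermitian)
    (W : Matrix (Fin d) (Fin d) ℂ) :
    star (((1 : Matrix (Fin d) (Fin d) ℂ) ⊗ₖ R).mulVec (fun p => if p.1 = p.2 then 1 else 0))
      ⬝ᵥ ((W ⊗ₖ (1 : Matrix (Fin d) (Fin d) ℂ)).mulVec
        (((1 : Matrix (Fin d) (Fin d) ℂ) ⊗ₖ S).mulVec (fun p => if p.1 = p.2 then 1 else 0)))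
      = (Wᵀ * (R * S)).trace := by
  rw [psi_eq R, psi_eq S]
  have hmv : (W ⊗ₖ (1 : Matrix (Fin d) (Fin d) ℂ)).mulVec (fun p => S p.2 p.1)
      = fun p => ∑ k, W p.1 k * S p.2 k := by
    funext p
    obtain ⟨i, j⟩ := p
    simp only [Matrix.mulVec, dotProduct, Fintype.sum_prod_type,
      Matrix.kroneckerMap_apply, Matrix.one_apply]
    rw [Finset.sum_comm]
    simp [ite_mul, mul_ite, Finset.sum_ite_eq, Finset.sum_ite_eq', mul_comm]
  rw [hmv]
  simp only [dotProduct, Fintype.sum_prod_type, Pi.star_apply, Matrix.trace,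
    Matrix.diag, Matrix.mul_apply, Matrix.transpose_apply]
  have hRh : ∀ i j, star (R j i) = R i j := fun i j => by
    conv_rhs => rw [← hR]
    simp [Matrix.conjTranspose_apply]
  simp_rw [hRh, Finset.mul_sum]
  have swap : ∀ i : Fin d, (∑ j, ∑ k, R i j * (W i k * S j k))
      = ∑ k, ∑ j, R i j * (W i k * S j k) := fun i => Finset.sum_comm
  simp_rw [swap]
  rw [Finset.sum_comm]
  refine Finset.sum_congr rfl (fun k _ => Finset.sum_congr rfl (fun i _ =>
    Finset.sum_congr rfl (fun j _ => by ring)))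

end kron

end Helpers

open scoped Matrix.Norms.L2Operator

/-- Root fidelity via canonical purifications: supremum over contractions, also over unitaries. -/
theorem root_fidelity_eq_sSup {d : ℕ} (ρ σ : Matrix (Fin d) (Fin d) ℂ)
    (hρ : ρ.PosSemidef) (hσ : σ.PosSemidef) (hρ1 : ρ.trace = 1) (hσ1 : σ.trace = 1) :
    ∀ Γ : Fin d × Fin d → ℂ, (Γ = fun p => if p.1 = p.2 then 1 else 0) →
    ∀ ψρ ψσ : Fin d × Fin d → ℂ,
      ψρ = ((1 : Matrix (Fin d) (Fin d) ℂ) ⊗ₖ hρ.sqrt).mulVec Γ →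
      ψσ = ((1 : Matrix (Fin d) (Fin d) ℂ) ⊗ₖ hσ.sqrt).mulVec Γ →
    (traceNorm (hρ.sqrt * hσ.sqrt) =
      sSup {x : ℝ | ∃ W : Matrix (Fin d) (Fin d) ℂ, opNorm W ≤ 1 ∧
        x = (star ψρ ⬝ᵥ ((W ⊗ₖ (1 : Matrix (Fin d) (Fin d) ℂ)).mulVec ψσ)).re} ∧
    traceNorm (hρ.sqrt * hσ.sqrt) =
      sSup {x : ℝ | ∃ U ∈ Matrix.unitaryGroup (Fin d) ℂ,
        x = (star ψρ ⬝ᵥ ((U ⊗ₖ (1 : Matrix (Fin d) (Fin d) ℂ)).mulVec ψσ)).re}) := by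
  intro Γ hΓ ψρ ψσ hψρ hψσ
  subst hΓ hψρ hψσ
  set N : Matrix (Fin d) (Fin d) ℂ := hρ.sqrt * hσ.sqrt with hNdef
  have hkey : ∀ W : Matrix (Fin d) (Fin d) ℂ,
      star (((1 : Matrix (Fin d) (Fin d) ℂ) ⊗ₖ hρ.sqrt).mulVec
          (fun p => if p.1 = p.2 then 1 else 0))
        ⬝ᵥ ((W ⊗ₖ (1 : Matrix (Fin d) (Fin d) ℂ)).mulVec
          (((1 : Matrix (Fin d) (Fin d) ℂ) ⊗ₖ hσ.sqrt).mulVec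
            (fun p => if p.1 = p.2 then 1 else 0)))
      = (Wᵀ * N).trace :=
    fun W => inner_kron hρ.sqrt hσ.sqrt hρ.posSemidef_sqrt.1 W
  obtain ⟨U₀, hU₀, hpolar⟩ := exists_polar N
  set P : Matrix (Fin d) (Fin d) ℂ := (Matrix.posSemidef_conjTranspose_mul_self N).sqrt
    with hPdef
  have hPpsd : P.PosSemidef := (Matrix.posSemidef_conjTranspose_mul_self N).posSemidef_sqrt
  have htr : traceNorm N = P.trace.re := rfl
  -- upper bound
  have ub : ∀ W : Matrix (Fin d) (Fin d) ℂ, opNorm W ≤ 1 →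
      ((Wᵀ * N).trace).re ≤ traceNorm N := by
    intro W hW
    rw [opNorm_eq_norm] at hW
    have h1 : Wᵀ * N = (Wᵀ * U₀) * P := by rw [Matrix.mul_assoc, ← hpolar]
    rw [htr, h1]
    refine re_trace_mul_le hPpsd ?_
    calc ‖Wᵀ * U₀‖ ≤ ‖Wᵀ‖ * ‖U₀‖ := Matrix.l2_opNorm_mul _ _
      _ ≤ 1 * 1 := by
          have h2 : ‖Wᵀ‖ ≤ 1 := by rw [l2norm_transpose]; exact hW
          have h3 : ‖U₀‖ ≤ 1 := l2norm_unitary hU₀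
          exact mul_le_mul h2 h3 (norm_nonneg _) zero_le_one
      _ = 1 := one_mul 1
  -- the optimal unitary
  set W₀ : Matrix (Fin d) (Fin d) ℂ := U₀.map star with hW₀def
  have hW₀T : W₀ᵀ = U₀ᴴ := by
    ext i j; simp [hW₀def, Matrix.conjTranspose_apply]
  have hval : ((W₀ᵀ * N).trace).re = traceNorm N := by
    rw [hW₀T, htr]
    have h4 : U₀ᴴ * N = P := by
      conv_lhs => rw [hpolar]
      rw [← Matrix.mul_assoc, show U₀ᴴ * U₀ = 1 from Matrix.mem_unitaryGroup_iff'.mp hU₀,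
        Matrix.one_mul]
    rw [h4]
  have hW₀mem : W₀ ∈ Matrix.unitaryGroup (Fin d) ℂ := by
    rw [Matrix.mem_unitaryGroup_iff']
    have h5 : star W₀ = U₀ᵀ := by
      ext i j; simp [hW₀def, Matrix.conjTranspose_apply]
    have h6 : W₀ = (U₀ᴴ)ᵀ := by
      ext i j; simp [hW₀def, Matrix.conjTranspose_apply]
    rw [h5, h6, ← Matrix.transpose_mul, show U₀ᴴ * U₀ = 1 from Matrix.mem_unitaryGroup_iff'.mp hU₀,
      Matrix.transpose_one]
  have hW₀norm : opNorm W₀ ≤ 1 := by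
    rw [opNorm_eq_norm, hW₀def, l2norm_map_star]
    exact l2norm_unitary hU₀
  have hmemval : traceNorm N = (star (((1 : Matrix (Fin d) (Fin d) ℂ) ⊗ₖ hρ.sqrt).mulVec
      (fun p => if p.1 = p.2 then 1 else 0))
      ⬝ᵥ ((W₀ ⊗ₖ (1 : Matrix (Fin d) (Fin d) ℂ)).mulVec
        (((1 : Matrix (Fin d) (Fin d) ℂ) ⊗ₖ hσ.sqrt).mulVec
          (fun p => if p.1 = p.2 then 1 else 0)))).re := by
    rw [hkey W₀, hval]
  constructor
  · apply le_antisymm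
    · refine le_csSup ⟨traceNorm N, ?_⟩ ⟨W₀, hW₀norm, hmemval⟩
      rintro x ⟨W, hW, rfl⟩
      rw [hkey W]
      exact ub W hW
    · refine csSup_le ⟨traceNorm N, ⟨W₀, hW₀norm, hmemval⟩⟩ ?_
      rintro x ⟨W, hW, rfl⟩
      rw [hkey W]
      exact ub W hW
  · apply le_antisymm
    · refine le_csSup ⟨traceNorm N, ?_⟩ ⟨W₀, hW₀mem, hmemval⟩
      rintro x ⟨W, hW, rfl⟩
      rw [hkey W]
      refine ub W ?_
      rw [opNorm_eq_norm]
      exact l2norm_unitary hW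
    · refine csSup_le ⟨traceNorm N, ⟨W₀, hW₀mem, hmemval⟩⟩ ?_
      rintro x ⟨W, hW, rfl⟩
      rw [hkey W]
      refine ub W ?_
      rw [opNorm_eq_norm]
      exact l2norm_unitary hW
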